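/- Let F be a finite field with q elements and K a field extension of F of degree n. For α ∈ K define Q_α := Π_{j=0}^{n−1} (x − α^{q^j}), a monic polynomial of degree n whose coefficients lie in F. Then for every monic polynomial h ∈ F[x] of degree ℓ: Σ_{k | n} (n/k) · #{f ∈ F[x] : f monic irreducible, deg f = n/k, and f^k is type-II equivalent to h} = #{α ∈ K : Q_α is type-II equivalent to h}. -/

import Mathlib

open Polynomial

/-- Two monic polynomials are type-II equivalent if their reversals agree
modulo `X^(ℓ+1)`. -/
def TypeIIEquiv {R : Type*} [CommRing R] (ℓ : ℕ) (f g : Polynomial R) : Prop :=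
  (X ^ (ℓ + 1) : Polynomial R) ∣ (f.reverse - g.reverse)

section Aux

lemma exists_qpow_algHom (F : Type*) [Field F] [Fintype F] (q : ℕ) (hq : Fintype.card F = q)
    (K : Type*) [Field K] [Algebra F K] :
    ∃ ψ : K →ₐ[F] K, ∀ x, ψ x = x ^ q := by
  set p := ringChar F
  haveI hp : Fact p.Prime := ⟨CharP.char_is_prime F p⟩
  obtain ⟨ν, hν⟩ := FiniteField.card F p
  haveI : CharP K p := charP_of_injective_algebraMap (algebraMap F K).injective p
  haveI : ExpChar K p := ExpChar.prime hp.out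
  refine ⟨{ toRingHom := iterateFrobenius K p ν, commutes' := ?_ }, ?_⟩
  · intro a
    have : (algebraMap F K a) ^ q = algebraMap F K a := by
      rw [← map_pow, ← hq, FiniteField.pow_card]
    simpa [iterateFrobenius_def, ← hν.2, hq] using this
  · intro x
    simp [iterateFrobenius_def, ← hν.2, hq]

lemma fixed_mem_range (F : Type*) [Field F] [Fintype F] (q : ℕ) (hq : Fintype.card F = q)
    (K : Type*) [Field K] [Algebra F K] (x : K) (hx : x ^ q = x) :
    x ∈ Set.range (algebraMap F K) := by
  have hq2 : 1 < q := hq ▸ Fintype.one_lt_card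
  set P : K[X] := X ^ q - X with hP
  have hPne : P ≠ 0 := FiniteField.X_pow_card_sub_X_ne_zero K hq2
  have hdeg : P.natDegree = q := FiniteField.X_pow_card_sub_X_natDegree_eq K hq2
  classical
  set T : Finset K := Finset.univ.image (algebraMap F K) with hT
  have hTcard : T.card = q := by
    rw [hT, Finset.card_image_of_injective _ (algebraMap F K).injective,
      Finset.card_univ, hq]
  have hroot : ∀ a ∈ T, P.IsRoot a := by
    intro a ha
    rw [hT, Finset.mem_image] at ha
    obtain ⟨b, -, rfl⟩ := ha
    have : (algebraMap F K b) ^ q = algebraMap F K b := by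
      rw [← map_pow, ← hq, FiniteField.pow_card]
    simp [IsRoot, hP, sub_eq_zero, this]
  have hsub : T.val ≤ P.roots := by
    rw [Multiset.le_iff_count]
    intro a
    by_cases ha : a ∈ T
    · have h1 : Multiset.count a T.val ≤ 1 := Multiset.nodup_iff_count_le_one.mp T.nodup a
      have h2 : 1 ≤ Multiset.count a P.roots :=
        Multiset.one_le_count_iff_mem.mpr ((mem_roots hPne).mpr (hroot a ha))
      omega
    · simp [Multiset.count_eq_zero_of_notMem ha]
  have hcard : P.roots.card ≤ q := hdeg ▸ P.card_roots'
  have heq : T.val = P.roots := Multiset.eq_of_le_of_card_le hsub (by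
    have : Multiset.card T.val = T.card := rfl
    omega)
  have : x ∈ P.roots := (mem_roots hPne).mpr (by
    simp only [IsRoot, hP, eval_sub, eval_pow, eval_X, sub_eq_zero, hx])
  rw [← heq] at this
  rw [hT] at this
  simpa using Finset.mem_image.mp this

lemma keyA (F : Type*) [Field F] [Fintype F] (q : ℕ) (hq : Fintype.card F = q)
    (K : Type*) [Field K] [Algebra F K] [FiniteDimensional F K]
    (n : ℕ) (hn : Module.finrank F K = n) (hn1 : 1 ≤ n) (α : K) :
    (minpoly F α).natDegree ∣ n ∧
    ∏ j ∈ Finset.range n, (X - C (α ^ q ^ j)) =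
      ((minpoly F α).map (algebraMap F K)) ^ (n / (minpoly F α).natDegree) := by
  classical
  haveI : Finite K := Module.finite_of_finite F
  haveI : Fintype K := Fintype.ofFinite K
  have hcardK : Fintype.card K = q ^ n := by
    rw [← hq, ← hn]; exact Module.card_eq_pow_finrank
  have hint : IsIntegral F α := IsIntegral.of_finite F α
  set f := minpoly F α with hf
  set d := f.natDegree with hd
  have hdvd : d ∣ n := hn ▸ minpoly.degree_dvd hint
  have hdpos : 0 < d := minpoly.natDegree_pos hint
  obtain ⟨ψ, hψ⟩ := exists_qpow_algHom F q hq K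
  have hpow_succ : ∀ (x : K) (j : ℕ), x ^ q ^ (j + 1) = (x ^ q ^ j) ^ q := by
    intro x j; rw [← pow_mul, ← pow_succ]
  have hpow_add : ∀ (x : K) (i j : ℕ), x ^ q ^ (i + j) = (x ^ q ^ i) ^ q ^ j := by
    intro x i j; rw [← pow_mul, ← pow_add]
  have hper_n : α ^ q ^ n = α := by
    have := FiniteField.pow_card α
    rwa [hcardK] at this
  have hex : ∃ m, 0 < m ∧ α ^ q ^ m = α := ⟨n, hn1, hper_n⟩
  set d' := Nat.find hex with hd'
  obtain ⟨hd'pos, hd'per⟩ : 0 < d' ∧ α ^ q ^ d' = α := Nat.find_spec hex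
  have hd'min : ∀ m, 0 < m → m < d' → α ^ q ^ m ≠ α := by
    intro m hm hmd' hper
    exact Nat.find_min hex hmd' ⟨hm, hper⟩
  set u : ℕ → K[X] := fun j => X - C (α ^ q ^ j) with hu
  have hstep : ∀ j, u (j + d') = u j := by
    intro j
    have : α ^ q ^ (j + d') = α ^ q ^ j := by
      rw [Nat.add_comm, hpow_add, hd'per]
    rw [hu]
    simp only []
    rw [this]
  have hiter : ∀ (m : ℕ) (x : K), (⇑ψ)^[m] x = x ^ q ^ m := by
    intro m
    induction m with
    | zero => simp
    | succ m ih => intro x; rw [Function.iterate_succ_apply', ih, hψ, hpow_succ]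
  have hkey : ∀ i j : ℕ, i < j → j < d' → α ^ q ^ i = α ^ q ^ j → False := by
    intro i j hlt hj heq
    have hiterinj : Function.Injective (⇑ψ)^[i] :=
      Function.Injective.iterate (ψ.toRingHom.injective) i
    have e1 : (⇑ψ)^[i] α = α ^ q ^ i := hiter i α
    have e2 : (⇑ψ)^[i] (α ^ q ^ (j - i)) = α ^ q ^ j := by
      rw [hiter, ← hpow_add, Nat.sub_add_cancel (le_of_lt hlt)]
    have h2 : α = α ^ q ^ (j - i) := hiterinj (by rw [e1, e2, heq])
    exact hd'min (j - i) (by omega) (by omega) h2.symm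
  have hinj : Set.InjOn (fun j => α ^ q ^ j) (Finset.range d') := by
    rintro i hi j hj hij
    simp only [Finset.coe_range, Set.mem_Iio] at hi hj
    simp only [] at hij
    rcases lt_trichotomy i j with hlt | heq | hgt
    · exact absurd hij (fun hh => hkey i j hlt hj hh)
    · exact heq
    · exact absurd hij.symm (fun hh => hkey j i hgt hi hh)
  set g' : K[X] := ∏ j ∈ Finset.range d', u j with hg'
  have hg'monic : g'.Monic := monic_prod_of_monic _ _ (fun j _ => monic_X_sub_C _)
  have hg'deg : g'.natDegree = d' := by
    rw [hg', natDegree_prod _ _ (fun j _ => X_sub_C_ne_zero _)]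
    have h1 : ∀ j ∈ Finset.range d', (u j).natDegree = 1 := by
      intro j _; rw [hu]; exact natDegree_X_sub_C _
    rw [Finset.sum_congr rfl h1]
    simp
  have hmapg' : g'.map ψ.toRingHom = g' := by
    have h1 : g'.map ψ.toRingHom = ∏ j ∈ Finset.range d', (X - C (α ^ q ^ (j + 1))) := by
      rw [hg', Polynomial.map_prod]
      refine Finset.prod_congr rfl fun j _ => ?_
      rw [hu]
      simp only [Polynomial.map_sub, map_X, map_C]
      rw [show (ψ.toRingHom (α ^ q ^ j) : K) = ψ (α ^ q ^ j) from rfl, hψ, ← hpow_succ]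
    have h2 : (∏ j ∈ Finset.range d', u (j + 1)) * u 0 = g' * u 0 := by
      rw [← Finset.prod_range_succ' u d', Finset.prod_range_succ, hg']
      congr 1
      have hst := hstep 0
      rw [Nat.zero_add] at hst
      exact hst
    have h3 : u 0 ≠ 0 := X_sub_C_ne_zero _
    have h4 : (∏ j ∈ Finset.range d', u (j + 1)) = g' := mul_right_cancel₀ h3 h2
    rw [h1, ← h4]
  have hlift : g' ∈ lifts (algebraMap F K) := by
    rw [lifts_iff_coeff_lifts]
    intro i
    apply fixed_mem_range F q hq K
    have := congrArg (fun p => Polynomial.coeff p i) hmapg'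
    simpa [coeff_map, hψ] using this
  obtain ⟨g₀, hg₀map, hg₀deg, hg₀monic⟩ :=
    lifts_and_degree_eq_and_monic hlift hg'monic
  have hg₀root : Polynomial.aeval α g₀ = 0 := by
    rw [aeval_def, ← eval_map, hg₀map, hg', eval_prod]
    apply Finset.prod_eq_zero (Finset.mem_range.mpr hd'pos)
    simp [hu]
  have hfd : f ∣ g₀ := minpoly.dvd F α hg₀root
  have hdle : d ≤ d' := by
    have := natDegree_le_of_dvd hfd hg₀monic.ne_zero
    have hdeq : g₀.natDegree = d' := by
      have := natDegree_eq_of_degree_eq hg₀deg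
      rw [this, hg'deg]
    omega
  set fK := f.map (algebraMap F K) with hfK
  have hfKmonic : fK.Monic := (minpoly.monic hint).map _
  have hfKne : fK ≠ 0 := hfKmonic.ne_zero
  have hfKdeg : fK.natDegree = d := by
    rw [hfK, natDegree_map]
  have hroota : ∀ j, Polynomial.aeval (α ^ q ^ j) f = 0 := by
    intro j
    induction j with
    | zero =>
      rw [pow_zero, pow_one]; exact minpoly.aeval F α
    | succ j ih =>
      have hx : (α ^ q ^ (j+1)) = ψ (α ^ q ^ j) := by rw [hψ, hpow_succ]
      rw [hx, aeval_algHom_apply, ih, map_zero]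
  have hroot : ∀ j, fK.IsRoot (α ^ q ^ j) := by
    intro j
    rw [IsRoot, hfK, eval_map, ← aeval_def]
    exact hroota j
  set M : Multiset K := (Multiset.range d').map (fun j => α ^ q ^ j) with hM
  have hMnodup : M.Nodup := Multiset.Nodup.map_on
    (fun i hi j hj => hinj (by simpa using hi) (by simpa using hj)) (Multiset.nodup_range d')
  have hMcard : Multiset.card M = d' := by simp [hM]
  have hMle : M ≤ fK.roots := by
    rw [Multiset.le_iff_count]
    intro a
    by_cases ha : a ∈ M
    · have h1 : Multiset.count a M ≤ 1 := Multiset.nodup_iff_count_le_one.mp hMnodup a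
      obtain ⟨j, -, rfl⟩ := Multiset.mem_map.mp ha
      have h2 : 1 ≤ Multiset.count _ fK.roots :=
        Multiset.one_le_count_iff_mem.mpr ((mem_roots hfKne).mpr (hroot j))
      omega
    · simp [Multiset.count_eq_zero_of_notMem ha]
  have hd'le : d' ≤ d := by
    have h1 := Multiset.card_le_card hMle
    have h2 : Multiset.card fK.roots ≤ d := hfKdeg ▸ fK.card_roots'
    omega
  have hdd : d = d' := le_antisymm hdle hd'le
  have hsplits : Splits fK := by
    rw [hfK]
    exact Normal.splits inferInstance α
  have hMeq : M = fK.roots := by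
    apply Multiset.eq_of_le_of_card_le hMle
    have h2 : Multiset.card fK.roots ≤ d := hfKdeg ▸ fK.card_roots'
    omega
  have hfKg' : fK = g' := by
    have := hsplits.eq_prod_roots_of_monic hfKmonic
    rw [this, ← hMeq, hM, Multiset.map_map, hg']
    rw [Finset.prod]
    congr 1
  have hprodpow : ∀ m : ℕ, ∏ j ∈ Finset.range (d' * m), u j = g' ^ m := by
    intro m
    induction m with
    | zero => simp
    | succ m ih =>
      have hperiodic : ∀ t j, u (j + d' * t) = u j := by
        intro t
        induction t with
        | zero => simp
        | succ t iht =>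
          intro j
          have : j + d' * (t + 1) = (j + d' * t) + d' := by ring
          rw [this, hstep, iht]
      rw [Nat.mul_succ, Finset.prod_range_add, ih, pow_succ]
      congr 1
      rw [hg']
      refine Finset.prod_congr rfl fun j _ => ?_
      rw [Nat.add_comm, hperiodic m j]
  refine ⟨hdvd, ?_⟩
  have hprod := hprodpow (n / d)
  have hrange : d' * (n / d) = n := by
    rw [← hdd]; exact Nat.mul_div_cancel' hdvd
  rw [hrange] at hprod
  calc ∏ j ∈ Finset.range n, (X - C (α ^ q ^ j)) = ∏ j ∈ Finset.range n, u j := by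
        exact Finset.prod_congr rfl fun j _ => by rw [hu]
    _ = g' ^ (n / d) := hprod
    _ = fK ^ (n / d) := by rw [hfKg']
    _ = ((minpoly F α).map (algebraMap F K)) ^ (n / (minpoly F α).natDegree) := by
        rw [hfK, ← hf, ← hd]

lemma countB (F : Type*) [Field F] [Fintype F] (q : ℕ) (hq : Fintype.card F = q)
    (K : Type*) [Field K] [Algebra F K] [FiniteDimensional F K]
    (n : ℕ) (hn : Module.finrank F K = n) (hn1 : 1 ≤ n)
    (f : Polynomial F) (hf : f.Monic) (hirr : Irreducible f)
    (m : ℕ) (hm : f.natDegree = m) (hmn : m ∣ n) :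
    {α : K | minpoly F α = f}.ncard = m := by
  classical
  haveI : Finite K := Module.finite_of_finite F
  haveI : Fintype K := Fintype.ofFinite K
  have hq2 : 1 < q := hq ▸ Fintype.one_lt_card
  have hcardK : Fintype.card K = q ^ n := by
    rw [← hq, ← hn]; exact Module.card_eq_pow_finrank
  have hstep1 : f ∣ (X ^ q ^ m - X : Polynomial F) := by
    haveI : Fact (Irreducible f) := ⟨hirr⟩
    set L := AdjoinRoot f with hL
    haveI : Module.Finite F L :=
      Module.Finite.of_basis (AdjoinRoot.powerBasis (f := f) hf.ne_zero).basis
    haveI : Finite L := Module.finite_of_finite F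
    haveI : Fintype L := Fintype.ofFinite L
    have hcardL : Fintype.card L = q ^ m := by
      rw [← hq, Module.card_eq_pow_finrank (K := F) (V := L)]
      congr 1
      rw [(AdjoinRoot.powerBasis (f := f) hf.ne_zero).finrank, AdjoinRoot.powerBasis_dim, hm]
    have hminr : minpoly F (AdjoinRoot.root f) = f := by
      rw [AdjoinRoot.minpoly_root hf.ne_zero, hf.leadingCoeff, inv_one, map_one, mul_one]
    have hr : (AdjoinRoot.root f) ^ q ^ m = AdjoinRoot.root f := by
      have := FiniteField.pow_card (AdjoinRoot.root f)
      rwa [hcardL] at this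
    have : Polynomial.aeval (AdjoinRoot.root f) (X ^ q ^ m - X : Polynomial F) = 0 := by
      simp [hr]
    have := minpoly.dvd F (AdjoinRoot.root f) this
    rwa [hminr] at this
  have hstep2 : (X ^ q ^ m - X : Polynomial F) ∣ (X ^ q ^ n - X : Polynomial F) := by
    obtain ⟨t, ht⟩ := hmn
    have h1 : q ^ m - 1 ∣ q ^ n - 1 := by
      have := Nat.sub_dvd_pow_sub_pow (q ^ m) 1 t
      rwa [one_pow, ← pow_mul, ← ht] at this
    obtain ⟨c, hc⟩ := h1
    have h2 : (X ^ (q ^ m - 1) - 1 : Polynomial F) ∣ (X ^ (q ^ n - 1) - 1) := by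
      have := sub_dvd_pow_sub_pow (X ^ (q ^ m - 1) : Polynomial F) 1 c
      rwa [one_pow, ← pow_mul, ← hc] at this
    have hqm1 : 1 ≤ q ^ m := Nat.one_le_pow _ _ (by omega)
    have hqn1 : 1 ≤ q ^ n := Nat.one_le_pow _ _ (by omega)
    have e1 : (X ^ q ^ m - X : Polynomial F) = X * (X ^ (q ^ m - 1) - 1) := by
      rw [mul_sub, mul_one, ← pow_succ']
      congr 2
      omega
    have e2 : (X ^ q ^ n - X : Polynomial F) = X * (X ^ (q ^ n - 1) - 1) := by
      rw [mul_sub, mul_one, ← pow_succ']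
      congr 2
      omega
    rw [e1, e2]
    exact mul_dvd_mul_left X h2
  have hbigne : (X ^ q ^ n - X : Polynomial K) ≠ 0 :=
    FiniteField.X_pow_card_pow_sub_X_ne_zero K (by omega) hq2
  have hbigdeg : (X ^ q ^ n - X : Polynomial K).natDegree = q ^ n :=
    FiniteField.X_pow_card_pow_sub_X_natDegree_eq K (by omega) hq2
  have hbigroots : (X ^ q ^ n - X : Polynomial K).roots = Finset.univ.val := by
    have := FiniteField.roots_X_pow_card_sub_X K
    rwa [hcardK] at this
  have hbigsplits : Splits (X ^ q ^ n - X : Polynomial K) := by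
    rw [splits_iff_card_roots, hbigroots, hbigdeg]
    have : Multiset.card (Finset.univ.val : Multiset K) = Fintype.card K := rfl
    rw [this, hcardK]
  set fK := f.map (algebraMap F K) with hfK
  have hfKdvd : fK ∣ (X ^ q ^ n - X : Polynomial K) := by
    have h1 : fK ∣ ((X ^ q ^ n - X : Polynomial F).map (algebraMap F K)) :=
      Polynomial.map_dvd _ (dvd_trans hstep1 hstep2)
    rwa [Polynomial.map_sub, Polynomial.map_pow, Polynomial.map_X] at h1
  have hfKne : fK ≠ 0 := (hf.map _).ne_zero
  have hfKsplits : Splits fK :=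
    hbigsplits.of_dvd hbigne hfKdvd
  have hfKsep : fK.Separable := (PerfectField.separable_of_irreducible hirr).map
  have hfKdeg : fK.natDegree = m := by rw [hfK, natDegree_map, hm]
  have hrootscard : Multiset.card fK.roots = m := by
    rw [← hfKdeg, ← splits_iff_card_roots]
    exact hfKsplits
  have hnodup : fK.roots.Nodup := Polynomial.nodup_roots hfKsep
  have hseteq : {α : K | minpoly F α = f} = ↑(fK.roots.toFinset) := by
    ext α
    simp only [Set.mem_setOf_eq, Finset.coe_sort_coe, Multiset.mem_toFinset, Finset.mem_coe]
    rw [mem_roots hfKne]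
    constructor
    · intro hmin
      rw [IsRoot, hfK, eval_map, ← aeval_def, ← hmin]
      exact minpoly.aeval F α
    · intro hroot
      rw [IsRoot, hfK, eval_map, ← aeval_def] at hroot
      exact (minpoly.eq_of_irreducible_of_monic hirr hroot hf).symm
  rw [hseteq, Set.ncard_coe_finset, Multiset.toFinset_card_of_nodup hnodup, hrootscard]

lemma typeII_map_iff (F K : Type*) [Field F] [Field K] [Algebra F K] (ℓ : ℕ)
    (p g : Polynomial F) :
    TypeIIEquiv ℓ (p.map (algebraMap F K)) (g.map (algebraMap F K)) ↔ TypeIIEquiv ℓ p g := by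
  show ((X ^ (ℓ + 1) : Polynomial K) ∣ _) ↔ ((X ^ (ℓ + 1) : Polynomial F) ∣ _)
  have hrev : ∀ r : Polynomial F,
      (r.map (algebraMap F K)).reverse = r.reverse.map (algebraMap F K) := by
    intro r
    rw [Polynomial.reverse, Polynomial.reverse, natDegree_map, Polynomial.reflect_map]
  rw [hrev, hrev, ← Polynomial.map_sub]
  rw [Polynomial.X_pow_dvd_iff, Polynomial.X_pow_dvd_iff]
  constructor
  · intro hh d hd
    have := hh d hd
    rw [Polynomial.coeff_map] at this
    exact (_root_.map_eq_zero (algebraMap F K)).mp this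
  · intro hh d hd
    rw [Polynomial.coeff_map, hh d hd, map_zero]

lemma finite_polyset (F : Type*) [Field F] [Fintype F] (N : ℕ) :
    {f : Polynomial F | f.natDegree ≤ N}.Finite := by
  classical
  apply Set.Finite.of_finite_image (f := fun f : Polynomial F => fun i : Fin (N + 1) => f.coeff i)
  · exact Set.toFinite _
  · intro f₁ h1 f₂ h2 heq
    ext i
    by_cases hi : i ≤ N
    · exact congrFun heq ⟨i, by omega⟩
    · rw [Polynomial.coeff_eq_zero_of_natDegree_lt (by simp only [Set.mem_setOf_eq] at h1; omega),
        Polynomial.coeff_eq_zero_of_natDegree_lt (by simp only [Set.mem_setOf_eq] at h2; omega)]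

end Aux

theorem typeII_irreducible_count_eq_char_poly_count
    (F : Type*) [Field F] [Fintype F] (q : ℕ) (hq : Fintype.card F = q)
    (K : Type*) [Field K] [Algebra F K] [FiniteDimensional F K]
    (n : ℕ) (hn : Module.finrank F K = n) (hn1 : 1 ≤ n)
    (ℓ : ℕ) (hℓ : 1 ≤ ℓ)
    (h : Polynomial F) (hmonic : h.Monic) (hdeg : h.natDegree = ℓ) :
    ∑ k ∈ n.divisors, (n / k) *
      {f : Polynomial F | f.Monic ∧ Irreducible f ∧ f.natDegree = n / k ∧
        TypeIIEquiv ℓ (f ^ k) h}.ncard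
    = {α : K |
        TypeIIEquiv ℓ (∏ j ∈ Finset.range n, (X - C (α ^ q ^ j)))
          (h.map (algebraMap F K))}.ncard := by
  classical
  haveI : Finite K := Module.finite_of_finite F
  haveI : Fintype K := Fintype.ofFinite K
  have hn0 : n ≠ 0 := by omega
  -- key per-α characterization
  have hkey : ∀ α : K,
      TypeIIEquiv ℓ (∏ j ∈ Finset.range n, (X - C (α ^ q ^ j))) (h.map (algebraMap F K))
      ↔ ((minpoly F α).Monic ∧ Irreducible (minpoly F α) ∧
          (minpoly F α).natDegree = n / (n / (minpoly F α).natDegree) ∧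
          TypeIIEquiv ℓ ((minpoly F α) ^ (n / (minpoly F α).natDegree)) h) := by
    intro α
    obtain ⟨hdvd, hQ⟩ := keyA F q hq K n hn hn1 α
    have hint : IsIntegral F α := IsIntegral.of_finite F α
    have hdd : n / (n / (minpoly F α).natDegree) = (minpoly F α).natDegree :=
      Nat.div_div_self hdvd hn0
    constructor
    · intro hT
      refine ⟨minpoly.monic hint, minpoly.irreducible hint, hdd.symm, ?_⟩
      rw [hQ, ← Polynomial.map_pow] at hT
      exact (typeII_map_iff F K ℓ _ h).mp hT
    · rintro ⟨-, -, -, hT⟩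
      rw [hQ, ← Polynomial.map_pow]
      exact (typeII_map_iff F K ℓ _ h).mpr hT
  -- finiteness of the polynomial sets
  have hAfin : ∀ k : ℕ, ({f : Polynomial F | f.Monic ∧ Irreducible f ∧ f.natDegree = n / k ∧
      TypeIIEquiv ℓ (f ^ k) h}).Finite := by
    intro k
    apply (finite_polyset F n).subset
    intro f hf
    simp only [Set.mem_setOf_eq] at hf ⊢
    rw [hf.2.2.1]
    exact Nat.div_le_self n k
  set s : Finset K := Finset.univ.filter (fun α =>
    TypeIIEquiv ℓ (∏ j ∈ Finset.range n, (X - C (α ^ q ^ j))) (h.map (algebraMap F K)))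
    with hs
  have hRHS : {α : K |
      TypeIIEquiv ℓ (∏ j ∈ Finset.range n, (X - C (α ^ q ^ j)))
        (h.map (algebraMap F K))}.ncard = s.card := by
    rw [← Set.ncard_coe_finset]
    congr 1
    ext α
    simp [hs]
  set t : Finset (Polynomial F) := n.divisors.biUnion (fun k => (hAfin k).toFinset) with ht
  have hmem : ∀ α ∈ s, minpoly F α ∈ t := by
    intro α hα
    rw [hs, Finset.mem_filter] at hα
    obtain ⟨hdvd, -⟩ := keyA F q hq K n hn hn1 α
    have hk := (hkey α).mp hα.2
    rw [ht, Finset.mem_biUnion]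
    refine ⟨n / (minpoly F α).natDegree,
      Nat.mem_divisors.mpr ⟨Nat.div_dvd_of_dvd hdvd, hn0⟩, ?_⟩
    rw [Set.Finite.mem_toFinset]
    exact ⟨hk.1, hk.2.1, hk.2.2.1, hk.2.2.2⟩
  have hcount := Finset.card_eq_sum_card_fiberwise hmem
  have hdisj : (↑n.divisors : Set ℕ).PairwiseDisjoint (fun k => (hAfin k).toFinset) := by
    intro k hk k' hk' hne
    simp only [Function.onFun]
    rw [Finset.disjoint_left]
    intro f hf hf'
    rw [Set.Finite.mem_toFinset] at hf hf'
    have h1 : n / k = n / k' := by rw [← hf.2.2.1, hf'.2.2.1]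
    apply hne
    have hk1 : k ∣ n := (Nat.mem_divisors.mp (Finset.mem_coe.mp hk)).1
    have hk2 : k' ∣ n := (Nat.mem_divisors.mp (Finset.mem_coe.mp hk')).1
    calc k = n / (n / k) := (Nat.div_div_self hk1 hn0).symm
      _ = n / (n / k') := by rw [h1]
      _ = k' := Nat.div_div_self hk2 hn0
  rw [Finset.sum_biUnion hdisj] at hcount
  have hinner : ∀ k ∈ n.divisors, ∀ f ∈ (hAfin k).toFinset,
      (s.filter (fun α => minpoly F α = f)).card = n / k := by
    intro k hk f hf
    rw [Set.Finite.mem_toFinset] at hf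
    obtain ⟨hfmon, hfirr, hfdeg, hfT⟩ := hf
    have hkdvd : k ∣ n := (Nat.mem_divisors.mp hk).1
    have hnkdvd : n / k ∣ n := Nat.div_dvd_of_dvd hkdvd
    have hfilter : s.filter (fun α => minpoly F α = f) =
        Finset.univ.filter (fun α => minpoly F α = f) := by
      ext α
      simp only [hs, Finset.mem_filter, Finset.mem_univ, true_and]
      constructor
      · rintro ⟨-, hm⟩; exact hm
      · intro hm
        refine ⟨?_, hm⟩
        apply (hkey α).mpr
        rw [hm]
        have e : n / f.natDegree = k := by
          rw [hfdeg]; exact Nat.div_div_self hkdvd hn0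
        rw [e]
        exact ⟨hfmon, hfirr, hfdeg, hfT⟩
    rw [hfilter]
    have hB := countB F q hq K n hn hn1 f hfmon hfirr (n / k) hfdeg hnkdvd
    rw [← hB, ← Set.ncard_coe_finset]
    congr 1
    ext α
    simp
  calc ∑ k ∈ n.divisors, (n / k) *
      {f : Polynomial F | f.Monic ∧ Irreducible f ∧ f.natDegree = n / k ∧
        TypeIIEquiv ℓ (f ^ k) h}.ncard
      = ∑ k ∈ n.divisors, ∑ f ∈ (hAfin k).toFinset,
          (s.filter (fun α => minpoly F α = f)).card := by
        refine Finset.sum_congr rfl fun k hk => ?_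
        rw [Finset.sum_congr rfl (hinner k hk), Finset.sum_const, smul_eq_mul,
          Set.ncard_eq_toFinset_card _ (hAfin k), mul_comm]
    _ = s.card := hcount.symm
    _ = _ := hRHS.symm
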